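/- Let 𝔽 be a field, K(s) ∈ 𝔽[s]^{m×r} and L(s) ∈ 𝔽[s]^{r×n} polynomial matrices of rank r such that K(s) and L(s)^T are column reduced, with k′₁, …, k′_r the column degrees of K(s) and ℓ′₁, …, ℓ′_r the column degrees of L(s)^T. Let Ê(s) ∈ 𝔽[s]^{r×r} be any polynomial matrix, A(s) = K(s)Ê(s)L(s), and F(s) = diag(s^{k′₁}, …, s^{k′_r}) · Ê(s) · diag(s^{ℓ′₁}, …, s^{ℓ′_r}). Then F(s) and A(s) have the same degree and, for every 1 ≤ k ≤ rank Ê(s), M_k(F(s)) = M_k(A(s)); in particular F(s) and A(s) have the same partial multiplicities of ∞. -/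

import Mathlib

open Polynomial Matrix

noncomputable section

variable {F : Type*} [Field F]

/-- The image of a polynomial matrix in the field of rational functions. -/
def ratMap {m n : ℕ} (P : Matrix (Fin m) (Fin n) F[X]) :
    Matrix (Fin m) (Fin n) (RatFunc F) :=
  P.map (algebraMap F[X] (RatFunc F))

/-- Degree of a polynomial matrix: maximum of the degrees of its entries
(`⊥` for the zero matrix). -/
def matDegree {m n : ℕ} (P : Matrix (Fin m) (Fin n) F[X]) : WithBot ℕ :=
  Finset.univ.sup fun ij : Fin m × Fin n => (P ij.1 ij.2).degree

/-- Degree of the `j`-th column of a polynomial matrix. -/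
def colDegree {m n : ℕ} (P : Matrix (Fin m) (Fin n) F[X]) (j : Fin n) : WithBot ℕ :=
  Finset.univ.sup fun i : Fin m => (P i j).degree

/-- Degree of the `j`-th column, as a natural number. -/
def colDegNat {m n : ℕ} (P : Matrix (Fin m) (Fin n) F[X]) (j : Fin n) : ℕ :=
  Finset.univ.sup fun i : Fin m => (P i j).natDegree

/-- The highest-column-degree coefficient matrix. -/
def highCoeffMatrix {m n : ℕ} (P : Matrix (Fin m) (Fin n) F[X]) : Matrix (Fin m) (Fin n) F :=
  Matrix.of fun i j => (P i j).coeff (colDegNat P j)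

/-- A polynomial matrix is column reduced (column proper) if its
highest-column-degree coefficient matrix has full rank. -/
def IsColumnReduced {m n : ℕ} (P : Matrix (Fin m) (Fin n) F[X]) : Prop :=
  (highCoeffMatrix P).rank = min m n

/-- A polynomial matrix `N ∈ 𝔽[s]^{m×r}` is a minimal basis if `N(s₀)` has rank `r`
for every `s₀` in an algebraic closure of `𝔽` and `N` is column reduced. -/
def IsMinimalBasis {m r : ℕ} (N : Matrix (Fin m) (Fin r) F[X]) : Prop :=
  (∀ s₀ : AlgebraicClosure F, (N.map fun p => (aeval s₀) p).rank = r) ∧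
    IsColumnReduced N

/-- The `𝔽(s)`-subspace spanned by the columns of a rational matrix. -/
def colSpace {m n : ℕ} (R : Matrix (Fin m) (Fin n) (RatFunc F)) :
    Submodule (RatFunc F) (Fin m → RatFunc F) :=
  LinearMap.range R.mulVecLin

/-- A square polynomial matrix is unimodular if its determinant is a nonzero
element of `𝔽`. -/
def IsUnimodular {r : ℕ} (U : Matrix (Fin r) (Fin r) F[X]) : Prop :=
  ∃ c : F, c ≠ 0 ∧ U.det = Polynomial.C c

/-- The `m × n` matrix whose `(i,i)` entry is `α i` for `i < r` and whose other
entries are `0`. -/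
def smithMatrix (m n : ℕ) {r : ℕ} (α : Fin r → F[X]) : Matrix (Fin m) (Fin n) F[X] :=
  Matrix.of fun i j =>
    if h : (i : ℕ) = (j : ℕ) ∧ (i : ℕ) < r then α ⟨(i : ℕ), h.2⟩ else 0

/-- `A` has `α 0 ∣ ⋯ ∣ α (r-1)` as invariant factors. -/
def HasInvariantFactors {m n r : ℕ} (A : Matrix (Fin m) (Fin n) F[X])
    (α : Fin r → F[X]) : Prop :=
  ∃ U : Matrix (Fin m) (Fin m) F[X], ∃ V : Matrix (Fin n) (Fin n) F[X],
    IsUnimodular U ∧ IsUnimodular V ∧ U * A * V = smithMatrix m n α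

/-- `M_k(A)`: the maximum of the degrees of the `k×k` minors of `A`. -/
def maxMinorDegree {m n : ℕ} (A : Matrix (Fin m) (Fin n) F[X]) (k : ℕ) : WithBot ℕ :=
  Finset.univ.sup fun fg : (Fin k → Fin m) × (Fin k → Fin n) =>
    ((A.submatrix fg.1 fg.2).det).degree

/-- `A` (of degree `d`) has `f 0 ≤ ⋯ ≤ f (r-1)` as partial multiplicities of `∞`:
`f 1 + ⋯ + f k = k·d − M_k(A)` for `1 ≤ k ≤ r`. -/
def HasInftyPartialMults {m n : ℕ} (A : Matrix (Fin m) (Fin n) F[X]) (d : ℕ)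
    {r : ℕ} (f : Fin r → ℕ) : Prop :=
  ∀ k : ℕ, 1 ≤ k → k ≤ r →
    maxMinorDegree A k + (((∑ i : Fin r, if (i : ℕ) < k then f i else 0) : ℕ) : WithBot ℕ)
      = ((k * d : ℕ) : WithBot ℕ)

/-- A rational function is proper if the degree of its numerator is at most the
degree of its denominator. -/
def IsProperRat (x : RatFunc F) : Prop := x.num.degree ≤ x.denom.degree

/-- A rational function is biproper if it is nonzero and the degrees of its
numerator and denominator are equal. -/
def IsBiproperRat (x : RatFunc F) : Prop := x ≠ 0 ∧ x.num.degree = x.denom.degree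

/-- A square rational matrix is biproper if all its entries are proper and its
determinant is a biproper rational function. -/
def IsBiproper {m : ℕ} (B : Matrix (Fin m) (Fin m) (RatFunc F)) : Prop :=
  (∀ i j, IsProperRat (B i j)) ∧ IsBiproperRat B.det

/-- The `m × n` matrix whose `(i,i)` entry is `s^{-q i}` for `i < r` and whose
other entries are `0`. -/
def smithAtInfty (F : Type*) [Field F] (m n : ℕ) {r : ℕ} (q : Fin r → ℤ) :
    Matrix (Fin m) (Fin n) (RatFunc F) :=
  Matrix.of fun i j =>
    if h : (i : ℕ) = (j : ℕ) ∧ (i : ℕ) < r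
    then (RatFunc.X : RatFunc F) ^ (-(q ⟨(i : ℕ), h.2⟩)) else 0

/-- `R` has `q 0 ≤ ⋯ ≤ q (r-1)` as invariant orders at infinity. -/
def HasInvOrdersAtInfty {m n r : ℕ} (R : Matrix (Fin m) (Fin n) (RatFunc F))
    (q : Fin r → ℤ) : Prop :=
  ∃ B₁ : Matrix (Fin m) (Fin m) (RatFunc F), ∃ B₂ : Matrix (Fin n) (Fin n) (RatFunc F),
    IsBiproper B₁ ∧ IsBiproper B₂ ∧ B₁ * R * B₂ = smithAtInfty F m n q

/-- The `m × n` matrix whose `(i,i)` entry is `ε i / ψ i` for `i < r` and whose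
other entries are `0` (Smith–McMillan form). -/
def smithMcMillan (F : Type*) [Field F] (m n : ℕ) {r : ℕ} (ε ψ : Fin r → F[X]) :
    Matrix (Fin m) (Fin n) (RatFunc F) :=
  Matrix.of fun i j =>
    if h : (i : ℕ) = (j : ℕ) ∧ (i : ℕ) < r
    then algebraMap F[X] (RatFunc F) (ε ⟨(i : ℕ), h.2⟩) /
         algebraMap F[X] (RatFunc F) (ψ ⟨(i : ℕ), h.2⟩)
    else 0

/-- `R` has the irreducible rational functions `ε i / ψ i` as invariant rational
functions. -/
def HasInvRatFns {m n r : ℕ} (R : Matrix (Fin m) (Fin n) (RatFunc F))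
    (ε ψ : Fin r → F[X]) : Prop :=
  ∃ U : Matrix (Fin m) (Fin m) F[X], ∃ V : Matrix (Fin n) (Fin n) F[X],
    IsUnimodular U ∧ IsUnimodular V ∧ ratMap U * R * ratMap V = smithMcMillan F m n ε ψ

/-- Partial sum of the first `k` entries of a finite integer sequence. -/
def psum {r : ℕ} (a : Fin r → ℤ) (k : ℕ) : ℤ :=
  ∑ i : Fin r, if (i : ℕ) < k then a i else 0

/-- Majorization `a ≺ b` of decreasing integer sequences. -/
def IsMajorizedBy {r : ℕ} (a b : Fin r → ℤ) : Prop :=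
  (∀ k : ℕ, 1 ≤ k → k ≤ r - 1 → psum a k ≤ psum b k) ∧ psum a r = psum b r

/-- `R` has `k 0 ≥ ⋯ ≥ k (r-1)` as col-span minimal indices. -/
def HasColSpanMinIndices {m n r : ℕ} (R : Matrix (Fin m) (Fin n) (RatFunc F))
    (k : Fin r → ℕ) : Prop :=
  ∃ K : Matrix (Fin m) (Fin r) F[X], IsMinimalBasis K ∧
    (∀ j, colDegree K j = (k j : WithBot ℕ)) ∧ colSpace (ratMap K) = colSpace R

/-- `R` has `l 0 ≥ ⋯ ≥ l (r-1)` as row-span minimal indices. -/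
def HasRowSpanMinIndices {m n r : ℕ} (R : Matrix (Fin m) (Fin n) (RatFunc F))
    (l : Fin r → ℕ) : Prop :=
  HasColSpanMinIndices Rᵀ l

/-- `R` has `dd 0 ≥ ⋯ ≥ dd (p-1)` as right minimal indices. -/
def HasRightMinIndices {m n p : ℕ} (R : Matrix (Fin m) (Fin n) (RatFunc F))
    (dd : Fin p → ℕ) : Prop :=
  ∃ N : Matrix (Fin n) (Fin p) F[X], IsMinimalBasis N ∧
    (∀ j, colDegree N j = (dd j : WithBot ℕ)) ∧
    colSpace (ratMap N) = LinearMap.ker R.mulVecLin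

/-- `R` has `v 0 ≥ ⋯ ≥ v (p-1)` as left minimal indices. -/
def HasLeftMinIndices {m n p : ℕ} (R : Matrix (Fin m) (Fin n) (RatFunc F))
    (v : Fin p → ℕ) : Prop :=
  HasRightMinIndices Rᵀ v

noncomputable section S6helpers

namespace S6

open scoped Classical

variable {R : Type*} [CommRing R]

/-- The finset of strictly monotone maps `Fin k → Fin b`. -/
def monoset (k b : ℕ) : Finset (Fin k → Fin b) := Finset.univ.filter StrictMono

lemma mem_monoset {k b : ℕ} {γ : Fin k → Fin b} : γ ∈ monoset k b ↔ StrictMono γ := by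
  simp [monoset]

lemma card_image_univ {k b : ℕ} {γ : Fin k → Fin b} (hγ : Function.Injective γ) :
    (Finset.image γ Finset.univ).card = k := by
  rw [Finset.card_image_of_injective _ hγ, Finset.card_univ, Fintype.card_fin]

lemma mono_eq_of_image_eq {k b : ℕ} {f g : Fin k → Fin b} (hf : StrictMono f)
    (hg : StrictMono g) (h : Finset.image f Finset.univ = Finset.image g Finset.univ) :
    f = g := by
  have hcf := card_image_univ hf.injective
  have h1 : f = (Finset.image f Finset.univ).orderEmbOfFin hcf :=
    Finset.orderEmbOfFin_unique hcf
      (fun x => Finset.mem_image_of_mem f (Finset.mem_univ x)) hf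
  have h2 : g = (Finset.image f Finset.univ).orderEmbOfFin hcf :=
    Finset.orderEmbOfFin_unique hcf
      (fun x => h ▸ Finset.mem_image_of_mem g (Finset.mem_univ x)) hg
  rw [h1, h2]

lemma exists_mono_perm {k b : ℕ} {γ : Fin k → Fin b} (hγ : Function.Injective γ) :
    ∃ γ0 : Fin k → Fin b, ∃ σ : Equiv.Perm (Fin k), StrictMono γ0 ∧ γ = γ0 ∘ σ := by
  set s := Finset.image γ Finset.univ with hs
  have hcard : s.card = k := card_image_univ hγ
  set γ0 : Fin k → Fin b := ⇑(s.orderEmbOfFin hcard) with hγ0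
  have hmono : StrictMono γ0 := (s.orderEmbOfFin hcard).strictMono
  have hmem : ∀ j, γ j ∈ s := fun j => Finset.mem_image_of_mem γ (Finset.mem_univ j)
  set τ : Fin k → Fin k := fun j => (s.orderIsoOfFin hcard).symm ⟨γ j, hmem j⟩ with hτ
  have hτinj : Function.Injective τ := by
    intro i j hij
    apply hγ
    have h2 : ((s.orderIsoOfFin hcard) (τ i) : Fin b) = (s.orderIsoOfFin hcard) (τ j) := by
      rw [hij]
    simpa [hτ, OrderIso.apply_symm_apply] using h2
  have hτbij : Function.Bijective τ := Finite.injective_iff_bijective.mp hτinj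
  refine ⟨γ0, Equiv.ofBijective τ hτbij, hmono, ?_⟩
  funext j
  show γ j = γ0 (τ j)
  have : γ0 (τ j) = ((s.orderIsoOfFin hcard) ((s.orderIsoOfFin hcard).symm ⟨γ j, hmem j⟩) : Fin b) := by
    rw [Finset.coe_orderIsoOfFin_apply]
  rw [this, OrderIso.apply_symm_apply]

lemma det_submatrix_zero_of_not_injective {a b k : ℕ} (B : Matrix (Fin a) (Fin b) R)
    (α : Fin k → Fin a) {γ : Fin k → Fin b} (hγ : ¬ Function.Injective γ) :
    (B.submatrix α γ).det = 0 := by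
  simp only [Function.Injective, not_forall] at hγ
  obtain ⟨i, j, hij, hne⟩ := hγ
  exact Matrix.det_zero_of_column_eq hne (fun x => by simp [Matrix.submatrix_apply, hij])

/-- Expansion of a minor of a product as a sum over all index functions. -/
lemma det_submatrix_mul_sum {a b c k : ℕ} (B : Matrix (Fin a) (Fin b) R)
    (C : Matrix (Fin b) (Fin c) R) (α : Fin k → Fin a) (β : Fin k → Fin c) :
    ((B * C).submatrix α β).det
      = ∑ γ : Fin k → Fin b, (∏ j, C (γ j) (β j)) * (B.submatrix α γ).det := by
  rw [← Matrix.det_transpose]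
  have hM : ((B * C).submatrix α β)ᵀ
      = Matrix.of (fun j : Fin k => ∑ p : Fin b, C p (β j) • (fun i : Fin k => B (α i) p)) := by
    ext j i
    simp [Matrix.mul_apply, mul_comm]
  rw [hM]
  have := (Matrix.detRowAlternating :
      (Fin k → R) [⋀^Fin k]→ₗ[R] R).toMultilinearMap.map_sum
    (g := fun (j : Fin k) (p : Fin b) => C p (β j) • (fun i : Fin k => B (α i) p))
  rw [show (Matrix.of (fun j : Fin k => ∑ p : Fin b, C p (β j) • (fun i : Fin k => B (α i) p))).det
      = (Matrix.detRowAlternating : (Fin k → R) [⋀^Fin k]→ₗ[R] R).toMultilinearMap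
          (fun j : Fin k => ∑ p : Fin b, C p (β j) • (fun i : Fin k => B (α i) p)) from rfl]
  rw [this]
  refine Finset.sum_congr rfl fun γ _ => ?_
  rw [MultilinearMap.map_smul_univ]
  rw [smul_eq_mul]
  congr 1
  rw [← Matrix.det_transpose (B.submatrix α γ)]
  rfl

lemma image_univ_perm {k : ℕ} (σ : Equiv.Perm (Fin k)) :
    Finset.image (⇑σ) Finset.univ = Finset.univ := by
  ext x
  simp only [Finset.mem_image, Finset.mem_univ, true_and, iff_true]
  exact ⟨σ.symm x, by simp⟩

/-- Cauchy–Binet formula for minors of a product. -/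
lemma cauchy_binet {a b c k : ℕ} (B : Matrix (Fin a) (Fin b) R)
    (C : Matrix (Fin b) (Fin c) R) (α : Fin k → Fin a) (β : Fin k → Fin c) :
    ((B * C).submatrix α β).det
      = ∑ γ ∈ monoset k b, (B.submatrix α γ).det * (C.submatrix γ β).det := by
  rw [det_submatrix_mul_sum]
  have h1 : ∑ γ : Fin k → Fin b, (∏ j, C (γ j) (β j)) * (B.submatrix α γ).det
      = ∑ γ ∈ Finset.univ.filter (fun γ : Fin k → Fin b => Function.Injective γ),
          (∏ j, C (γ j) (β j)) * (B.submatrix α γ).det := by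
    refine (Finset.sum_filter_of_ne fun γ _ hne => ?_).symm
    by_contra h
    exact hne (by rw [det_submatrix_zero_of_not_injective B α h, mul_zero])
  rw [h1]
  have h2 : ∑ p ∈ (monoset k b) ×ˢ (Finset.univ : Finset (Equiv.Perm (Fin k))),
        (∏ j, C ((p.1 ∘ p.2) j) (β j)) * (B.submatrix α (p.1 ∘ p.2)).det
      = ∑ γ ∈ Finset.univ.filter (fun γ : Fin k → Fin b => Function.Injective γ),
          (∏ j, C (γ j) (β j)) * (B.submatrix α γ).det := by
    refine Finset.sum_nbij (fun p => p.1 ∘ p.2) ?_ ?_ ?_ ?_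
    · rintro ⟨γ0, σ⟩ hp
      simp only [Finset.mem_product, mem_monoset] at hp
      simp only [Finset.mem_filter, Finset.mem_univ, true_and]
      exact hp.1.injective.comp σ.injective
    · rintro ⟨γ0, σ⟩ hp ⟨γ1, τ⟩ hq h
      replace h : γ0 ∘ ⇑σ = γ1 ∘ ⇑τ := h
      simp only [Finset.coe_product, Set.mem_prod, Finset.mem_coe, mem_monoset] at hp hq
      have him : Finset.image γ0 Finset.univ = Finset.image γ1 Finset.univ := by
        have e0 : Finset.image (γ0 ∘ ⇑σ) Finset.univ = Finset.image γ0 Finset.univ := by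
          rw [← Finset.image_image, image_univ_perm]
        have e1 : Finset.image (γ1 ∘ ⇑τ) Finset.univ = Finset.image γ1 Finset.univ := by
          rw [← Finset.image_image, image_univ_perm]
        rw [← e0, ← e1, h]
      have hγ : γ0 = γ1 := mono_eq_of_image_eq hp.1 hq.1 him
      subst hγ
      have hστ : σ = τ := by
        ext j
        exact Fin.val_eq_of_eq (hp.1.injective (congrFun h j))
      rw [hστ]
    · intro γ hγ
      simp only [Finset.coe_filter, Set.mem_setOf_eq, Finset.mem_univ, true_and] at hγ
      obtain ⟨γ0, σ, hmono, heq⟩ := exists_mono_perm hγ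
      exact ⟨(γ0, σ), by simp [Finset.mem_coe, Finset.mem_product, mem_monoset, hmono], heq.symm⟩
    · intro p hp
      rfl
  rw [← h2, Finset.sum_product]
  refine Finset.sum_congr rfl fun γ0 hγ0 => ?_
  rw [Matrix.det_apply (C.submatrix γ0 β), Finset.mul_sum]
  refine Finset.sum_congr rfl fun σ _ => ?_
  have hsub : B.submatrix α (γ0 ∘ ⇑σ) = (B.submatrix α γ0).submatrix id ⇑σ := by
    rw [Matrix.submatrix_submatrix]
    rfl
  rw [hsub, Matrix.det_permute']
  simp only [Matrix.submatrix_apply, Units.smul_def, zsmul_eq_mul, Function.comp_apply]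
  ring

lemma det_submatrix_zero_of_not_injective_row {a b k : ℕ} (B : Matrix (Fin a) (Fin b) R)
    (β : Fin k → Fin b) {γ : Fin k → Fin a} (hγ : ¬ Function.Injective γ) :
    (B.submatrix γ β).det = 0 := by
  simp only [Function.Injective, not_forall] at hγ
  obtain ⟨i, j, hij, hne⟩ := hγ
  exact Matrix.det_zero_of_row_eq hne (by funext x; simp [Matrix.submatrix_apply, hij])

lemma det_one_submatrix {b k : ℕ} {γ' γ : Fin k → Fin b} (hγ' : StrictMono γ')
    (hγ : StrictMono γ) :
    ((1 : Matrix (Fin b) (Fin b) R).submatrix γ' γ).det = if γ' = γ then 1 else 0 := by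
  by_cases h : γ' = γ
  · subst h
    rw [if_pos rfl]
    have : (1 : Matrix (Fin b) (Fin b) R).submatrix γ' γ' = 1 := by
      ext i j
      by_cases hij : i = j
      · subst hij; simp [Matrix.one_apply]
      · rw [Matrix.submatrix_apply, Matrix.one_apply_ne, Matrix.one_apply_ne hij]
        exact fun hc => hij (hγ'.injective hc)
    rw [this, Matrix.det_one]
  · rw [if_neg h]
    have him : Finset.image γ Finset.univ ≠ Finset.image γ' Finset.univ := by
      intro hc
      exact h (mono_eq_of_image_eq hγ' hγ hc.symm)
    have hcards : (Finset.image γ Finset.univ).card = (Finset.image γ' Finset.univ).card := by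
      rw [card_image_univ hγ.injective, card_image_univ hγ'.injective]
    have hnot : ¬ Finset.image γ Finset.univ ⊆ Finset.image γ' Finset.univ := by
      intro hc
      exact him (Finset.eq_of_subset_of_card_le hc (le_of_eq hcards.symm))
    obtain ⟨x, hx, hx'⟩ := Finset.not_subset.mp hnot
    obtain ⟨j, _, hj⟩ := Finset.mem_image.mp hx
    refine Matrix.det_eq_zero_of_column_eq_zero j fun i => ?_
    rw [Matrix.submatrix_apply, Matrix.one_apply_ne]
    intro hc
    exact hx' (hj ▸ hc ▸ Finset.mem_image_of_mem γ' (Finset.mem_univ i))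

/-- Cauchy–Binet for a triple product. -/
lemma cauchy_binet₃ {a b c d k : ℕ} (K : Matrix (Fin a) (Fin b) R)
    (E : Matrix (Fin b) (Fin c) R) (L : Matrix (Fin c) (Fin d) R)
    (α : Fin k → Fin a) (β : Fin k → Fin d) :
    ((K * E * L).submatrix α β).det
      = ∑ γ ∈ monoset k b, ∑ δ ∈ monoset k c,
          (K.submatrix α γ).det * ((E.submatrix γ δ).det * (L.submatrix δ β).det) := by
  rw [cauchy_binet (K * E) L α β]
  rw [Finset.sum_comm]
  refine (Finset.sum_congr rfl fun δ hδ => ?_).symm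
  rw [cauchy_binet K E α δ, Finset.sum_mul]
  exact Finset.sum_congr rfl fun γ hγ => by ring

section FieldLemmas

variable {F : Type*} [Field F]

lemma nz_sum {m n r k : ℕ} {P : Matrix (Fin m) (Fin r) F} {Lh : Matrix (Fin r) (Fin n) F}
    (Q : Matrix (Fin r) (Fin m) F) (hQ : Q * P = 1)
    (T : Matrix (Fin n) (Fin r) F) (hT : Lh * T = 1)
    (G : (Fin k → Fin r) → (Fin k → Fin r) → F)
    {γ0 δ0 : Fin k → Fin r} (hγ0 : γ0 ∈ monoset k r) (hδ0 : δ0 ∈ monoset k r)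
    (hG : G γ0 δ0 ≠ 0) :
    ∃ α : Fin k → Fin m, ∃ β : Fin k → Fin n,
      (∑ γ ∈ monoset k r, ∑ δ ∈ monoset k r,
        (P.submatrix α γ).det * G γ δ * (Lh.submatrix δ β).det) ≠ 0 := by
  by_contra hcon
  push_neg at hcon
  have hid : ∀ δ δ' : Fin k → Fin r, δ ∈ monoset k r → δ' ∈ monoset k r →
      ((1 : Matrix (Fin r) (Fin r) F).submatrix δ δ').det = if δ = δ' then 1 else 0 :=
    fun δ δ' hδ hδ' => det_one_submatrix (mem_monoset.mp hδ) (mem_monoset.mp hδ')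
  -- step 1 : for every α and every monotone δ', the inner `P`-sum vanishes
  have step1 : ∀ α : Fin k → Fin m, ∀ δ' ∈ monoset k r,
      (∑ γ ∈ monoset k r, (P.submatrix α γ).det * G γ δ') = 0 := by
    intro α δ' hδ'
    have h0 : ∑ β ∈ monoset k n,
        (∑ γ ∈ monoset k r, ∑ δ ∈ monoset k r,
          (P.submatrix α γ).det * G γ δ * (Lh.submatrix δ β).det) * (T.submatrix β δ').det
        = 0 := by
      refine Finset.sum_eq_zero fun β _ => ?_
      rw [hcon α β, zero_mul]
    have h1 : ∑ β ∈ monoset k n,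
        (∑ γ ∈ monoset k r, ∑ δ ∈ monoset k r,
          (P.submatrix α γ).det * G γ δ * (Lh.submatrix δ β).det) * (T.submatrix β δ').det
        = ∑ γ ∈ monoset k r, ∑ δ ∈ monoset k r, (P.submatrix α γ).det * G γ δ *
            ((Lh * T).submatrix δ δ').det := by
      have e1 : ∀ β, (∑ γ ∈ monoset k r, ∑ δ ∈ monoset k r,
            (P.submatrix α γ).det * G γ δ * (Lh.submatrix δ β).det) * (T.submatrix β δ').det
          = ∑ γ ∈ monoset k r, ∑ δ ∈ monoset k r,
            (P.submatrix α γ).det * G γ δ * ((Lh.submatrix δ β).det * (T.submatrix β δ').det) := by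
        intro β
        rw [Finset.sum_mul]
        refine Finset.sum_congr rfl fun γ _ => ?_
        rw [Finset.sum_mul]
        exact Finset.sum_congr rfl fun δ _ => by ring
      calc ∑ β ∈ monoset k n,
            (∑ γ ∈ monoset k r, ∑ δ ∈ monoset k r,
              (P.submatrix α γ).det * G γ δ * (Lh.submatrix δ β).det) * (T.submatrix β δ').det
          = ∑ β ∈ monoset k n, ∑ γ ∈ monoset k r, ∑ δ ∈ monoset k r,
              (P.submatrix α γ).det * G γ δ *
                ((Lh.submatrix δ β).det * (T.submatrix β δ').det) :=
            Finset.sum_congr rfl fun β _ => e1 β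
        _ = ∑ γ ∈ monoset k r, ∑ β ∈ monoset k n, ∑ δ ∈ monoset k r,
              (P.submatrix α γ).det * G γ δ *
                ((Lh.submatrix δ β).det * (T.submatrix β δ').det) := Finset.sum_comm
        _ = ∑ γ ∈ monoset k r, ∑ δ ∈ monoset k r, ∑ β ∈ monoset k n,
              (P.submatrix α γ).det * G γ δ *
                ((Lh.submatrix δ β).det * (T.submatrix β δ').det) :=
            Finset.sum_congr rfl fun γ _ => Finset.sum_comm
        _ = ∑ γ ∈ monoset k r, ∑ δ ∈ monoset k r, (P.submatrix α γ).det * G γ δ *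
              ((Lh * T).submatrix δ δ').det := by
            refine Finset.sum_congr rfl fun γ _ => Finset.sum_congr rfl fun δ _ => ?_
            rw [← Finset.mul_sum, cauchy_binet Lh T δ δ']
    rw [h1] at h0
    rw [← h0]
    refine (Finset.sum_congr rfl fun γ _ => ?_)
    rw [Finset.sum_eq_single_of_mem δ' hδ']
    · rw [hT, hid δ' δ' hδ' hδ', if_pos rfl, mul_one]
    · intro δ hδ hne
      rw [hT, hid δ δ' hδ hδ', if_neg hne, mul_zero]
  -- step 2 : deduce G γ0 δ0 = 0
  have step2 : G γ0 δ0 = 0 := by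
    have hid' : ∀ γ' γ : Fin k → Fin r, γ' ∈ monoset k r → γ ∈ monoset k r →
        ((1 : Matrix (Fin r) (Fin r) F).submatrix γ' γ).det = if γ' = γ then 1 else 0 :=
      fun γ' γ hγ' hγ => det_one_submatrix (mem_monoset.mp hγ') (mem_monoset.mp hγ)
    have h0 : ∑ α ∈ monoset k m,
        (Q.submatrix γ0 α).det * (∑ γ ∈ monoset k r, (P.submatrix α γ).det * G γ δ0) = 0 := by
      refine Finset.sum_eq_zero fun α _ => ?_
      rw [step1 α δ0 hδ0, mul_zero]
    have h1 : ∑ α ∈ monoset k m,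
        (Q.submatrix γ0 α).det * (∑ γ ∈ monoset k r, (P.submatrix α γ).det * G γ δ0)
        = ∑ γ ∈ monoset k r, ((Q * P).submatrix γ0 γ).det * G γ δ0 := by
      calc ∑ α ∈ monoset k m,
            (Q.submatrix γ0 α).det * (∑ γ ∈ monoset k r, (P.submatrix α γ).det * G γ δ0)
          = ∑ α ∈ monoset k m, ∑ γ ∈ monoset k r,
              (Q.submatrix γ0 α).det * (P.submatrix α γ).det * G γ δ0 := by
            refine Finset.sum_congr rfl fun α _ => ?_
            rw [Finset.mul_sum]
            exact Finset.sum_congr rfl fun γ _ => by ring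
        _ = ∑ γ ∈ monoset k r, ∑ α ∈ monoset k m,
              (Q.submatrix γ0 α).det * (P.submatrix α γ).det * G γ δ0 := Finset.sum_comm
        _ = ∑ γ ∈ monoset k r, ((Q * P).submatrix γ0 γ).det * G γ δ0 := by
            refine Finset.sum_congr rfl fun γ _ => ?_
            rw [← Finset.sum_mul, cauchy_binet Q P γ0 γ]
    rw [h1] at h0
    rw [← h0, Finset.sum_eq_single_of_mem γ0 hγ0]
    · rw [hQ, hid' γ0 γ0 hγ0 hγ0, if_pos rfl, one_mul]
    · intro γ hγ hne
      rw [hQ, hid' γ0 γ hγ0 hγ, if_neg (Ne.symm hne), zero_mul]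
  exact hG step2

lemma exists_left_inverse_of_rank {m r : ℕ} (P : Matrix (Fin m) (Fin r) F)
    (h : P.rank = r) : ∃ Q : Matrix (Fin r) (Fin m) F, Q * P = 1 := by
  have hker : LinearMap.ker P.mulVecLin = ⊥ := by
    have h1 := LinearMap.finrank_range_add_finrank_ker P.mulVecLin
    rw [show Module.finrank F (LinearMap.range P.mulVecLin) = P.rank from rfl, h] at h1
    have h2 : Module.finrank F (Fin r → F) = r := by
      simp [Module.finrank_pi]
    rw [h2] at h1
    have h3 : Module.finrank F (LinearMap.ker P.mulVecLin) = 0 := by omega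
    exact Submodule.finrank_eq_zero.mp h3
  obtain ⟨g, hg⟩ := LinearMap.exists_leftInverse_of_injective P.mulVecLin hker
  refine ⟨LinearMap.toMatrix' g, ?_⟩
  have : Matrix.toLin' (LinearMap.toMatrix' g * P) = Matrix.toLin' (1 : Matrix (Fin r) (Fin r) F) := by
    rw [Matrix.toLin'_mul, Matrix.toLin'_toMatrix']
    rw [show Matrix.toLin' P = P.mulVecLin from rfl]
    rw [hg, Matrix.toLin'_one]
  have := congrArg LinearMap.toMatrix' this
  rwa [LinearMap.toMatrix'_toLin', LinearMap.toMatrix'_toLin'] at this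

lemma ker_eq_bot_of_li_cols {a k : ℕ} (M : Matrix (Fin a) (Fin k) F)
    (h : LinearIndependent F (fun j : Fin k => (fun i => M i j : Fin a → F))) :
    LinearMap.ker M.mulVecLin = ⊥ := by
  rw [LinearMap.ker_eq_bot']
  intro x hx
  have := (Fintype.linearIndependent_iff.mp h) x ?_
  · funext j; exact this j
  · funext i
    have := congrFun hx i
    simpa [Matrix.mulVecLin_apply, Matrix.mulVec, dotProduct, mul_comm] using this

lemma rank_eq_of_li_cols {a k : ℕ} (M : Matrix (Fin a) (Fin k) F)
    (h : LinearIndependent F (fun j : Fin k => (fun i => M i j : Fin a → F))) :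
    M.rank = k := by
  have h1 := LinearMap.finrank_range_add_finrank_ker M.mulVecLin
  rw [ker_eq_bot_of_li_cols M h] at h1
  rw [finrank_bot, add_zero] at h1
  rw [show M.rank = Module.finrank F (LinearMap.range M.mulVecLin) from rfl, h1]
  simp [Module.finrank_pi]

lemma exists_li_cols {a b k : ℕ} (A : Matrix (Fin a) (Fin b) F) (h : k ≤ A.rank) :
    ∃ g : Fin k → Fin b,
      LinearIndependent F (fun j : Fin k => (fun i => A i (g j) : Fin a → F)) := by
  obtain ⟨s, hsub, hspan, hli⟩ := exists_linearIndependent F (Set.range Aᵀ)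
  have hfin : s.Finite := (Set.finite_range Aᵀ).subset hsub
  haveI : Fintype s := hfin.fintype
  have hcard : k ≤ s.toFinset.card := by
    have h1 : A.rank = Module.finrank F (Submodule.span F s) := by
      rw [Matrix.rank_eq_finrank_span_cols]
      exact congrArg (fun S : Submodule F (Fin a → F) => Module.finrank F S) hspan.symm
    have h2 : Module.finrank F (Submodule.span F s) = s.toFinset.card :=
      finrank_span_set_eq_card hli
    omega
  obtain ⟨t, hts, htcard⟩ := Finset.exists_subset_card_eq hcard
  have e : Fin k ≃ t := (t.equivFinOfCardEq htcard).symm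
  have hmem : ∀ i : Fin k, ((e i : Fin a → F)) ∈ Set.range Aᵀ := by
    intro i
    apply hsub
    have : ((e i : Fin a → F)) ∈ s.toFinset := hts (e i).2
    simpa using this
  choose g hg using fun i => hmem i
  refine ⟨g, ?_⟩
  have hli2 : LinearIndependent F (fun x : t => (x : Fin a → F)) := by
    have hsub2 : (↑t : Set (Fin a → F)) ⊆ s := by
      intro x hx
      have := hts hx
      simpa using this
    exact hli.comp (Set.inclusion hsub2) (Set.inclusion_injective hsub2)
  have hli3 : LinearIndependent F (fun i : Fin k => ((e i : Fin a → F))) :=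
    hli2.comp e e.injective
  have : (fun i : Fin k => (fun x => A x (g i) : Fin a → F))
      = fun i : Fin k => ((e i : Fin a → F)) := by
    funext i
    exact hg i
  rw [this]
  exact hli3

lemma exists_nonzero_minor {a b k : ℕ} (A : Matrix (Fin a) (Fin b) F) (h : k ≤ A.rank) :
    ∃ f : Fin k → Fin a, ∃ g : Fin k → Fin b, (A.submatrix f g).det ≠ 0 := by
  obtain ⟨g, hg⟩ := exists_li_cols A h
  set A₁ := A.submatrix id g with hA₁
  have hr1 : A₁.rank = k := rank_eq_of_li_cols _ (by exact hg)
  have hr2 : k ≤ A₁ᵀ.rank := by rw [Matrix.rank_transpose]; omega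
  obtain ⟨f, hf⟩ := exists_li_cols A₁ᵀ hr2
  refine ⟨f, g, ?_⟩
  -- (A.submatrix f g)ᵀ has linearly independent columns
  have hker : LinearMap.ker ((A.submatrix f g)ᵀ).mulVecLin = ⊥ := by
    apply ker_eq_bot_of_li_cols
    exact hf
  intro hdet
  have hdet' : ((A.submatrix f g)ᵀ).det = 0 := by rw [Matrix.det_transpose]; exact hdet
  obtain ⟨v, hv0, hv⟩ := (Matrix.exists_mulVec_eq_zero_iff).mpr hdet'
  have : v ∈ LinearMap.ker ((A.submatrix f g)ᵀ).mulVecLin := hv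
  rw [hker, Submodule.mem_bot] at this
  exact hv0 this

end FieldLemmas

section PolyLemmas

variable {F : Type*} [Field F]

lemma coeff_prod_bounds {ι : Type*} (s : Finset ι) (f : ι → F[X]) (bd : ι → ℕ)
    (h : ∀ i ∈ s, (f i).natDegree ≤ bd i) :
    (∏ i ∈ s, f i).coeff (∑ i ∈ s, bd i) = ∏ i ∈ s, (f i).coeff (bd i) := by
  induction s using Finset.cons_induction with
  | empty => simp
  | cons a s ha ih =>
    rw [Finset.prod_cons, Finset.sum_cons, Finset.prod_cons,
      Polynomial.coeff_mul_add_eq_of_natDegree_le (h a (Finset.mem_cons_self a s))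
        ((Polynomial.natDegree_prod_le _ _).trans
          (Finset.sum_le_sum fun i hi => h i (Finset.mem_cons_of_mem hi))),
      ih (fun i hi => h i (Finset.mem_cons_of_mem hi))]

lemma det_degree_le_col {k : ℕ} (M : Matrix (Fin k) (Fin k) F[X]) (bd : Fin k → ℕ)
    (h : ∀ i j, (M i j).degree ≤ ((bd j : ℕ) : WithBot ℕ)) :
    M.det.degree ≤ (((∑ j, bd j : ℕ)) : WithBot ℕ) := by
  rw [Matrix.det_apply']
  refine (Polynomial.degree_sum_le _ _).trans ?_
  refine Finset.sup_le fun σ _ => ?_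
  refine (Polynomial.degree_mul_le _ _).trans ?_
  have h1 : Polynomial.degree ((Equiv.Perm.sign σ : ℤ) : F[X]) ≤ 0 :=
    Polynomial.degree_intCast_le _
  have h2 : Polynomial.degree (∏ i, M (σ i) i) ≤ (((∑ j, bd j : ℕ)) : WithBot ℕ) := by
    refine (Polynomial.degree_prod_le _ _).trans ?_
    rw [Nat.cast_sum]
    exact Finset.sum_le_sum fun i _ => h (σ i) i
  calc Polynomial.degree ((Equiv.Perm.sign σ : ℤ) : F[X]) + Polynomial.degree (∏ i, M (σ i) i)
      ≤ 0 + (((∑ j, bd j : ℕ)) : WithBot ℕ) := add_le_add h1 h2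
    _ = (((∑ j, bd j : ℕ)) : WithBot ℕ) := zero_add _

lemma det_coeff_top_col {k : ℕ} (M : Matrix (Fin k) (Fin k) F[X]) (bd : Fin k → ℕ)
    (h : ∀ i j, (M i j).degree ≤ ((bd j : ℕ) : WithBot ℕ)) :
    M.det.coeff (∑ j, bd j) = (Matrix.of fun i j => (M i j).coeff (bd j)).det := by
  rw [Matrix.det_apply', Matrix.det_apply' (Matrix.of fun i j => (M i j).coeff (bd j)),
    Polynomial.finset_sum_coeff]
  refine Finset.sum_congr rfl fun σ _ => ?_
  rw [show ((Equiv.Perm.sign σ : ℤ) : F[X]) = Polynomial.C ((Equiv.Perm.sign σ : ℤ) : F) from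
    (Polynomial.C_eq_intCast _), Polynomial.coeff_C_mul]
  rw [coeff_prod_bounds Finset.univ (fun i => M (σ i) i) bd
    (fun i _ => Polynomial.natDegree_le_iff_degree_le.mpr (h (σ i) i))]
  rfl

end PolyLemmas

section Core

variable {F : Type*} [Field F]

lemma degree_det_permpair_le {k : ℕ} (N : Matrix (Fin k) (Fin k) F[X])
    (σ τ : Equiv.Perm (Fin k)) :
    ((N.submatrix ⇑σ ⇑τ).det).degree ≤ N.det.degree := by
  have hsub : N.submatrix ⇑σ ⇑τ = (N.submatrix ⇑σ id).submatrix id ⇑τ := by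
    rw [Matrix.submatrix_submatrix]
    rfl
  rw [hsub, Matrix.det_permute', Matrix.det_permute]
  refine (Polynomial.degree_mul_le _ _).trans ?_
  have h1 : Polynomial.degree ((((Equiv.Perm.sign τ) : ℤ) : F[X])) ≤ 0 :=
    Polynomial.degree_intCast_le _
  have h2 : Polynomial.degree ((((Equiv.Perm.sign σ) : ℤ) : F[X]) * N.det)
      ≤ N.det.degree := by
    refine (Polynomial.degree_mul_le _ _).trans ?_
    have := Polynomial.degree_intCast_le (R := F) ((Equiv.Perm.sign σ) : ℤ)
    calc Polynomial.degree ((((Equiv.Perm.sign σ) : ℤ) : F[X])) + N.det.degree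
        ≤ 0 + N.det.degree := add_le_add this le_rfl
      _ = N.det.degree := zero_add _
  calc Polynomial.degree ((((Equiv.Perm.sign τ) : ℤ) : F[X]))
        + Polynomial.degree ((((Equiv.Perm.sign σ) : ℤ) : F[X]) * N.det)
      ≤ 0 + N.det.degree := add_le_add h1 h2
    _ = N.det.degree := zero_add _

lemma le_maxMinorDegree {m n : ℕ} (A : Matrix (Fin m) (Fin n) F[X]) (k : ℕ)
    (f : Fin k → Fin m) (g : Fin k → Fin n) :
    ((A.submatrix f g).det).degree ≤ maxMinorDegree A k := by
  have h := Finset.le_sup (α := WithBot ℕ)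
    (s := (Finset.univ : Finset ((Fin k → Fin m) × (Fin k → Fin n))))
    (f := fun fg => ((A.submatrix fg.1 fg.2).det).degree)
    (Finset.mem_univ (f, g))
  exact h

lemma core {m n r kk : ℕ}
    (K : Matrix (Fin m) (Fin r) F[X]) (L : Matrix (Fin r) (Fin n) F[X])
    (E : Matrix (Fin r) (Fin r) F[X]) (k' l' : Fin r → ℕ)
    (hKdeg : ∀ i j, (K i j).degree ≤ ((k' j : ℕ) : WithBot ℕ))
    (hLdeg : ∀ i j, (L i j).degree ≤ ((l' i : ℕ) : WithBot ℕ))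
    (Khc : Matrix (Fin m) (Fin r) F) (hKhc : ∀ i j, Khc i j = (K i j).coeff (k' j))
    (Lhc : Matrix (Fin r) (Fin n) F) (hLhc : ∀ i j, Lhc i j = (L i j).coeff (l' i))
    (Q : Matrix (Fin r) (Fin m) F) (hQ : Q * Khc = 1)
    (T : Matrix (Fin n) (Fin r) F) (hT : Lhc * T = 1)
    (f₁ g₁ : Fin kk → Fin r) (hfg : (E.submatrix f₁ g₁).det ≠ 0) :
    maxMinorDegree (Matrix.diagonal (fun i => X ^ k' i) * E
        * Matrix.diagonal (fun i => X ^ l' i)) kk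
      = maxMinorDegree (K * E * L) kk := by
  set Fm := Matrix.diagonal (fun i => X ^ k' i) * E * Matrix.diagonal (fun i => X ^ l' i)
    with hFm
  have stepA : ∀ f g : Fin kk → Fin r, (Fm.submatrix f g).det
      = X ^ ((∑ i, k' (f i)) + (∑ j, l' (g j))) * (E.submatrix f g).det := by
    intro f g
    have hent : ∀ i j, Fm i j = X ^ k' i * E i j * X ^ l' j := by
      intro i j
      rw [hFm, Matrix.mul_diagonal, Matrix.diagonal_mul]
    have h1 : Fm.submatrix f g
        = Matrix.of fun i j => X ^ k' (f i) *
            (Matrix.of (fun i j => X ^ l' (g j) * (E.submatrix f g) i j)) i j := by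
      ext i j
      rw [Matrix.submatrix_apply, hent]
      simp only [Matrix.of_apply, Matrix.submatrix_apply]
      ring
    rw [h1, Matrix.det_mul_column, Matrix.det_mul_row,
      Finset.prod_pow_eq_pow_sum, Finset.prod_pow_eq_pow_sum, ← mul_assoc, ← pow_add]
  have stepAdeg : ∀ f g : Fin kk → Fin r, ((Fm.submatrix f g).det).degree
      = (((∑ i, k' (f i)) + (∑ j, l' (g j)) : ℕ) : WithBot ℕ)
          + ((E.submatrix f g).det).degree := by
    intro f g
    rw [stepA, Polynomial.degree_mul, Polynomial.degree_X_pow]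
  set M := maxMinorDegree Fm kk with hM
  have hles : ∀ f g : Fin kk → Fin r, ((Fm.submatrix f g).det).degree ≤ M := by
    intro f g
    rw [hM]
    exact le_maxMinorDegree Fm kk f g
  have hMne : M ≠ ⊥ := by
    have h1 : ((Fm.submatrix f₁ g₁).det).degree ≤ M := hles f₁ g₁
    intro hbot
    rw [hbot, le_bot_iff, stepAdeg, WithBot.add_eq_bot] at h1
    rcases h1 with h | h
    · exact WithBot.coe_ne_bot h
    · exact hfg (Polynomial.degree_eq_bot.mp h)
  obtain ⟨M₀, hM₀⟩ := WithBot.ne_bot_iff_exists.mp hMne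
  obtain ⟨fg0, -, hfg0⟩ := Finset.exists_mem_eq_sup
    (Finset.univ : Finset ((Fin kk → Fin r) × (Fin kk → Fin r)))
    ⟨(f₁, g₁), Finset.mem_univ _⟩
    (fun fg => ((Fm.submatrix fg.1 fg.2).det).degree)
  have hM' : M = ((Fm.submatrix fg0.1 fg0.2).det).degree := hfg0
  have hdet0 : (Fm.submatrix fg0.1 fg0.2).det ≠ 0 := by
    intro h0
    exact hMne (by rw [hM', h0, Polynomial.degree_zero])
  have hinj1 : Function.Injective fg0.1 := by
    by_contra h
    exact hdet0 (det_submatrix_zero_of_not_injective_row Fm fg0.2 h)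
  have hinj2 : Function.Injective fg0.2 := by
    by_contra h
    exact hdet0 (det_submatrix_zero_of_not_injective Fm fg0.1 h)
  obtain ⟨γ0, σ, hγ0mono, hγ0⟩ := exists_mono_perm hinj1
  obtain ⟨δ0, τ, hδ0mono, hδ0⟩ := exists_mono_perm hinj2
  have hdeg0 : ((Fm.submatrix γ0 δ0).det).degree = M := by
    apply le_antisymm
    · exact hles γ0 δ0
    · rw [hM']
      have hsub : Fm.submatrix fg0.1 fg0.2 = (Fm.submatrix γ0 δ0).submatrix ⇑σ ⇑τ := by
        rw [Matrix.submatrix_submatrix, ← hγ0, ← hδ0]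
      rw [hsub]
      exact degree_det_permpair_le _ σ τ
  have hγ0S : γ0 ∈ monoset kk r := mem_monoset.mpr hγ0mono
  have hδ0S : δ0 ∈ monoset kk r := mem_monoset.mpr hδ0mono
  set G : (Fin kk → Fin r) → (Fin kk → Fin r) → F :=
    fun γ δ => ((Fm.submatrix γ δ).det).coeff M₀ with hG
  have hGne : G γ0 δ0 ≠ 0 := by
    have hd : ((Fm.submatrix γ0 δ0).det).degree = (M₀ : WithBot ℕ) := by
      rw [hdeg0, ← hM₀]
      rfl
    exact Polynomial.coeff_ne_zero_of_eq_degree hd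
  have hpdeg : ∀ (α : Fin kk → Fin m) (γ : Fin kk → Fin r),
      ((K.submatrix α γ).det).degree ≤ ((∑ i, k' (γ i) : ℕ) : WithBot ℕ) :=
    fun α γ => det_degree_le_col (K.submatrix α γ) (fun j => k' (γ j))
      (fun i j => hKdeg (α i) (γ j))
  have hpcoeff : ∀ (α : Fin kk → Fin m) (γ : Fin kk → Fin r),
      ((K.submatrix α γ).det).coeff (∑ i, k' (γ i)) = (Khc.submatrix α γ).det := by
    intro α γ
    rw [det_coeff_top_col (K.submatrix α γ) (fun j => k' (γ j))
      (fun i j => hKdeg (α i) (γ j))]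
    congr 1
    ext i j
    rw [Matrix.of_apply, Matrix.submatrix_apply, Matrix.submatrix_apply, hKhc]
  have hudeg : ∀ (δ : Fin kk → Fin r) (β : Fin kk → Fin n),
      ((L.submatrix δ β).det).degree ≤ ((∑ i, l' (δ i) : ℕ) : WithBot ℕ) := by
    intro δ β
    rw [← Matrix.det_transpose]
    exact det_degree_le_col (L.submatrix δ β)ᵀ (fun j => l' (δ j))
      (fun i j => hLdeg (δ j) (β i))
  have hucoeff : ∀ (δ : Fin kk → Fin r) (β : Fin kk → Fin n),
      ((L.submatrix δ β).det).coeff (∑ i, l' (δ i)) = (Lhc.submatrix δ β).det := by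
    intro δ β
    rw [← Matrix.det_transpose (L.submatrix δ β)]
    rw [det_coeff_top_col (L.submatrix δ β)ᵀ (fun j => l' (δ j))
      (fun i j => hLdeg (δ j) (β i))]
    have : (Matrix.of fun i j => (((L.submatrix δ β)ᵀ) i j).coeff (l' (δ j)))
        = (Lhc.submatrix δ β)ᵀ := by
      ext i j
      rw [Matrix.of_apply, Matrix.transpose_apply, Matrix.transpose_apply,
        Matrix.submatrix_apply, Matrix.submatrix_apply, hLhc]
    rw [this, Matrix.det_transpose]
  have hub : maxMinorDegree (K * E * L) kk ≤ M := by
    simp only [maxMinorDegree]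
    refine Finset.sup_le fun fg _ => ?_
    rw [cauchy_binet₃ K E L fg.1 fg.2]
    refine (Polynomial.degree_sum_le _ _).trans ?_
    refine Finset.sup_le fun γ hγ => ?_
    refine (Polynomial.degree_sum_le _ _).trans ?_
    refine Finset.sup_le fun δ hδ => ?_
    have h1 : ((K.submatrix fg.1 γ).det
          * ((E.submatrix γ δ).det * (L.submatrix δ fg.2).det)).degree
        ≤ ((∑ i, k' (γ i) : ℕ) : WithBot ℕ) + (((E.submatrix γ δ).det).degree
            + ((∑ i, l' (δ i) : ℕ) : WithBot ℕ)) :=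
      (Polynomial.degree_mul_le _ _).trans (add_le_add (hpdeg _ _)
        ((Polynomial.degree_mul_le _ _).trans (add_le_add le_rfl (hudeg _ _))))
    refine h1.trans ?_
    have h2 : ((∑ i, k' (γ i) : ℕ) : WithBot ℕ) + (((E.submatrix γ δ).det).degree
          + ((∑ i, l' (δ i) : ℕ) : WithBot ℕ))
        = ((Fm.submatrix γ δ).det).degree := by
      rw [stepAdeg, Nat.cast_add]
      have := ((E.submatrix γ δ).det).degree
      rw [add_comm (((E.submatrix γ δ).det).degree) ((∑ i, l' (δ i) : ℕ) : WithBot ℕ),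
        ← add_assoc]
    rw [h2]
    exact hles γ δ
  have hcoeff : ∀ (α : Fin kk → Fin m) (β : Fin kk → Fin n),
      (((K * E * L).submatrix α β).det).coeff M₀
        = ∑ γ ∈ monoset kk r, ∑ δ ∈ monoset kk r,
            (Khc.submatrix α γ).det * G γ δ * (Lhc.submatrix δ β).det := by
    intro α β
    rw [cauchy_binet₃ K E L α β, Polynomial.finset_sum_coeff]
    refine Finset.sum_congr rfl fun γ hγ => ?_
    rw [Polynomial.finset_sum_coeff]
    refine Finset.sum_congr rfl fun δ hδ => ?_
    by_cases hq : (E.submatrix γ δ).det = 0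
    · have hGz : G γ δ = 0 := by
        show ((Fm.submatrix γ δ).det).coeff M₀ = 0
        rw [stepA, hq, mul_zero, Polynomial.coeff_zero]
      rw [hGz, hq]
      simp
    · have hdegq := Polynomial.degree_eq_natDegree hq
      have hle : ((Fm.submatrix γ δ).det).degree ≤ M := hles γ δ
      rw [stepAdeg, hdegq, ← hM₀] at hle
      have hsum : (∑ i, k' (γ i)) + (∑ i, l' (δ i)) + (E.submatrix γ δ).det.natDegree
          ≤ M₀ := by
        rw [← Nat.cast_add, Nat.cast_withBot] at hle
        exact WithBot.coe_le_coe.mp hle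
      set a := ∑ i, k' (γ i) with ha
      set c := ∑ i, l' (δ i) with hc
      set e := M₀ - (a + c) with he
      have heq : M₀ = (a + c) + e := by omega
      have heq2 : M₀ = e + (a + c) := by omega
      have hdqe : (E.submatrix γ δ).det.natDegree ≤ e := by omega
      have hGval : G γ δ = ((E.submatrix γ δ).det).coeff e := by
        show ((Fm.submatrix γ δ).det).coeff M₀ = _
        rw [stepA, heq2]
        show (X ^ (a + c) * (E.submatrix γ δ).det).coeff (e + (a + c))
            = (E.submatrix γ δ).det.coeff e
        rw [Polynomial.coeff_X_pow_mul]
      have hrearr : (K.submatrix α γ).det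
            * ((E.submatrix γ δ).det * (L.submatrix δ β).det)
          = ((K.submatrix α γ).det * (L.submatrix δ β).det) * (E.submatrix γ δ).det := by
        ring
      rw [hrearr]
      conv_lhs => rw [heq]
      rw [Polynomial.coeff_mul_add_eq_of_natDegree_le
        (Polynomial.natDegree_mul_le.trans (add_le_add
          (Polynomial.natDegree_le_iff_degree_le.mpr (hpdeg α γ))
          (Polynomial.natDegree_le_iff_degree_le.mpr (hudeg δ β)))) hdqe]
      rw [Polynomial.coeff_mul_add_eq_of_natDegree_le
        (Polynomial.natDegree_le_iff_degree_le.mpr (hpdeg α γ))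
        (Polynomial.natDegree_le_iff_degree_le.mpr (hudeg δ β))]
      rw [hpcoeff α γ, hucoeff δ β, hGval]
      ring
  obtain ⟨α, β, hnz⟩ := nz_sum Q hQ T hT G hγ0S hδ0S hGne
  have hlow : M ≤ maxMinorDegree (K * E * L) kk := by
    rw [← hM₀]
    have h1 : (((K * E * L).submatrix α β).det).coeff M₀ ≠ 0 := by
      rw [hcoeff α β]
      exact hnz
    have h2 : ((M₀ : ℕ) : WithBot ℕ) ≤ (((K * E * L).submatrix α β).det).degree :=
      Polynomial.le_degree_of_ne_zero h1
    exact h2.trans (le_maxMinorDegree (K * E * L) kk α β)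
  exact le_antisymm hlow hub

end Core

section Glue

variable {F : Type*} [Field F]

lemma le_matDegree {m n : ℕ} (P : Matrix (Fin m) (Fin n) F[X]) (i : Fin m) (j : Fin n) :
    (P i j).degree ≤ matDegree P := by
  have h := Finset.le_sup (α := WithBot ℕ)
    (s := (Finset.univ : Finset (Fin m × Fin n)))
    (f := fun ij => (P ij.1 ij.2).degree) (Finset.mem_univ (i, j))
  exact h

lemma matDegree_eq_maxMinorDegree_one {m n : ℕ} (P : Matrix (Fin m) (Fin n) F[X]) :
    matDegree P = maxMinorDegree P 1 := by
  apply le_antisymm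
  · unfold matDegree
    refine Finset.sup_le fun ij _ => ?_
    have h1 : (P.submatrix (fun _ : Fin 1 => ij.1) (fun _ : Fin 1 => ij.2)).det = P ij.1 ij.2 :=
      Matrix.det_fin_one _
    have h2 := le_maxMinorDegree P 1 (fun _ => ij.1) (fun _ => ij.2)
    rw [h1] at h2
    exact h2
  · unfold maxMinorDegree
    refine Finset.sup_le fun fg _ => ?_
    rw [Matrix.det_fin_one]
    exact le_matDegree P (fg.1 0) (fg.2 0)

lemma matDegree_zero {m n : ℕ} : matDegree (0 : Matrix (Fin m) (Fin n) F[X]) = ⊥ := by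
  unfold matDegree
  refine le_antisymm (Finset.sup_le fun ij _ => ?_) bot_le
  simp

lemma degree_le_colDegree {m n : ℕ} (P : Matrix (Fin m) (Fin n) F[X]) (i : Fin m) (j : Fin n) :
    (P i j).degree ≤ colDegree P j := by
  have h := Finset.le_sup (α := WithBot ℕ) (s := (Finset.univ : Finset (Fin m)))
    (f := fun i => (P i j).degree) (Finset.mem_univ i)
  exact h

lemma colDegNat_eq {m n : ℕ} (P : Matrix (Fin m) (Fin n) F[X]) (j : Fin n) (d : ℕ)
    (hm : 0 < m) (h : colDegree P j = (d : WithBot ℕ)) : colDegNat P j = d := by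
  unfold colDegNat
  apply le_antisymm
  · refine Finset.sup_le fun i _ => ?_
    have h1 := degree_le_colDegree P i j
    rw [h] at h1
    exact Polynomial.natDegree_le_iff_degree_le.mpr h1
  · have hne : (Finset.univ : Finset (Fin m)).Nonempty := ⟨⟨0, hm⟩, Finset.mem_univ _⟩
    obtain ⟨i0, -, hi0⟩ := Finset.exists_mem_eq_sup (Finset.univ : Finset (Fin m)) hne
      (fun i => (P i j).degree)
    have hdeg : (P i0 j).degree = (d : WithBot ℕ) := by
      rw [← hi0]
      exact h
    have hnat : (P i0 j).natDegree = d := Polynomial.natDegree_eq_of_degree_eq_some hdeg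
    have hle : (P i0 j).natDegree ≤ (Finset.univ : Finset (Fin m)).sup
        (fun i => (P i j).natDegree) :=
      Finset.le_sup (f := fun i => (P i j).natDegree) (Finset.mem_univ i0)
    exact hnat ▸ hle

lemma eq_zero_of_rank_eq_zero {F' : Type*} [Field F'] {a b : ℕ}
    (A : Matrix (Fin a) (Fin b) F') (h : A.rank = 0) : A = 0 := by
  have hr : LinearMap.range A.mulVecLin = ⊥ := Submodule.finrank_eq_zero.mp h
  ext i j
  have h1 : A.mulVec (Pi.single j 1) ∈ LinearMap.range A.mulVecLin := ⟨Pi.single j 1, rfl⟩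
  rw [hr, Submodule.mem_bot] at h1
  have h2 := congrFun h1 i
  rw [Matrix.mulVec_single] at h2
  simpa using h2

end Glue

end S6

end S6helpers

theorem statement6 {m n r ρ : ℕ}
    (K : Matrix (Fin m) (Fin r) F[X]) (L : Matrix (Fin r) (Fin n) F[X])
    (hKrank : (ratMap K).rank = r) (hLrank : (ratMap L).rank = r)
    (hKred : IsColumnReduced K) (hLred : IsColumnReduced Lᵀ)
    (k' l' : Fin r → ℕ)
    (hkdeg : ∀ j, colDegree K j = (k' j : WithBot ℕ))
    (hldeg : ∀ j, colDegree Lᵀ j = (l' j : WithBot ℕ))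
    (E : Matrix (Fin r) (Fin r) F[X]) (hρ : (ratMap E).rank = ρ) :
    matDegree (Matrix.diagonal (fun i => X ^ k' i) * E * Matrix.diagonal (fun i => X ^ l' i))
        = matDegree (K * E * L) ∧
    (∀ kk : ℕ, 1 ≤ kk → kk ≤ ρ →
      maxMinorDegree
          (Matrix.diagonal (fun i => X ^ k' i) * E * Matrix.diagonal (fun i => X ^ l' i)) kk
        = maxMinorDegree (K * E * L) kk) ∧
    (∀ (d : ℕ) (f : Fin ρ → ℕ),
      HasInftyPartialMults
          (Matrix.diagonal (fun i => X ^ k' i) * E * Matrix.diagonal (fun i => X ^ l' i)) d f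
        ↔ HasInftyPartialMults (K * E * L) d f) := by
  classical
  have hρr : ρ ≤ r := by
    have h1 := Matrix.rank_le_card_width (ratMap E)
    rw [hρ] at h1
    simpa using h1
  -- Part 2
  have hpart2 : ∀ kk : ℕ, 1 ≤ kk → kk ≤ ρ →
      maxMinorDegree
          (Matrix.diagonal (fun i => X ^ k' i) * E * Matrix.diagonal (fun i => X ^ l' i)) kk
        = maxMinorDegree (K * E * L) kk := by
    intro kk hkk1 hkkρ
    have hr1 : 1 ≤ r := le_trans (le_trans hkk1 hkkρ) hρr
    have hmr : r ≤ m := by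
      have h1 := Matrix.rank_le_card_height (ratMap K)
      rw [hKrank] at h1
      simpa using h1
    have hnr : r ≤ n := by
      have h1 := Matrix.rank_le_card_width (ratMap L)
      rw [hLrank] at h1
      simpa using h1
    -- entrywise degree bounds
    have hKdeg : ∀ i j, (K i j).degree ≤ ((k' j : ℕ) : WithBot ℕ) := by
      intro i j
      have h1 := S6.degree_le_colDegree K i j
      rw [hkdeg j] at h1
      exact h1
    have hLdeg : ∀ i j, (L i j).degree ≤ ((l' i : ℕ) : WithBot ℕ) := by
      intro i j
      have h1 := S6.degree_le_colDegree Lᵀ j i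
      rw [hldeg i] at h1
      exact h1
    -- highest-coefficient matrices
    have hKcdn : ∀ j, colDegNat K j = k' j := fun j =>
      S6.colDegNat_eq K j (k' j) (lt_of_lt_of_le hr1 hmr) (hkdeg j)
    have hLcdn : ∀ j, colDegNat Lᵀ j = l' j := fun j =>
      S6.colDegNat_eq Lᵀ j (l' j) (lt_of_lt_of_le hr1 hnr) (hldeg j)
    have hKhc : ∀ i j, (highCoeffMatrix K) i j = (K i j).coeff (k' j) := by
      intro i j
      show (K i j).coeff (colDegNat K j) = _
      rw [hKcdn j]
    have hLhc : ∀ i j, ((highCoeffMatrix Lᵀ)ᵀ) i j = (L i j).coeff (l' i) := by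
      intro i j
      show (Lᵀ j i).coeff (colDegNat Lᵀ i) = _
      rw [hLcdn i]
      rfl
    -- one-sided inverses of the highest-coefficient matrices
    have hKrk : (highCoeffMatrix K).rank = r := by
      rw [hKred]
      exact min_eq_right hmr
    obtain ⟨Q, hQ⟩ := S6.exists_left_inverse_of_rank (highCoeffMatrix K) hKrk
    have hLrk : (highCoeffMatrix Lᵀ).rank = r := by
      rw [hLred]
      exact min_eq_right hnr
    obtain ⟨Q', hQ'⟩ := S6.exists_left_inverse_of_rank (highCoeffMatrix Lᵀ) hLrk
    have hT : (highCoeffMatrix Lᵀ)ᵀ * Q'ᵀ = 1 := by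
      rw [← Matrix.transpose_mul, hQ', Matrix.transpose_one]
    -- a nonzero kk × kk minor of E
    have hkkrank : kk ≤ (ratMap E).rank := by
      rw [hρ]
      exact hkkρ
    obtain ⟨f₁, g₁, hdet⟩ := S6.exists_nonzero_minor (ratMap E) hkkrank
    have hfg : (E.submatrix f₁ g₁).det ≠ 0 := by
      intro h0
      apply hdet
      have h1 : (ratMap E).submatrix f₁ g₁ = (E.submatrix f₁ g₁).map
          (algebraMap F[X] (RatFunc F)) := by
        ext i j
        rfl
      rw [h1, show (E.submatrix f₁ g₁).map (algebraMap F[X] (RatFunc F))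
          = (algebraMap F[X] (RatFunc F)).mapMatrix (E.submatrix f₁ g₁) from rfl,
        ← RingHom.map_det, h0]
      simp
    exact S6.core K L E k' l' hKdeg hLdeg (highCoeffMatrix K) hKhc
      ((highCoeffMatrix Lᵀ)ᵀ) hLhc Q hQ Q'ᵀ hT f₁ g₁ hfg
  -- Part 1
  have hpart1 : matDegree
        (Matrix.diagonal (fun i => X ^ k' i) * E * Matrix.diagonal (fun i => X ^ l' i))
      = matDegree (K * E * L) := by
    by_cases hρ0 : ρ = 0
    · have hE0 : E = 0 := by
        have h1 : ratMap E = 0 := by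
          apply S6.eq_zero_of_rank_eq_zero
          rw [hρ, hρ0]
        refine Matrix.ext fun i j => ?_
        have h2 := congrFun (congrFun h1 i) j
        have h3 : E i j = 0 :=
          IsFractionRing.injective F[X] (RatFunc F) (by simpa [ratMap] using h2)
        simpa using h3
      rw [hE0]
      rw [Matrix.mul_zero, Matrix.zero_mul, Matrix.mul_zero, Matrix.zero_mul]
      rw [S6.matDegree_zero, S6.matDegree_zero]
    · have h1 : 1 ≤ ρ := Nat.one_le_iff_ne_zero.mpr hρ0
      rw [S6.matDegree_eq_maxMinorDegree_one, S6.matDegree_eq_maxMinorDegree_one,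
        hpart2 1 le_rfl h1]
  refine ⟨hpart1, hpart2, ?_⟩
  intro d f
  constructor
  · intro h kk h1 h2
    rw [← hpart2 kk h1 h2]
    exact h kk h1 h2
  · intro h kk h1 h2
    rw [hpart2 kk h1 h2]
    exact h kk h1 h2

end
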